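/- Let L be a Lie ring acting on a Z_p-module M via ψ: L → End(M) with [M, _d L] = 0, d < p. Define exp(ψ)(a) = Σ_{k=0}^{p-1} ψ(a)^k/k!. Then for every L-invariant submodule U of M and every a ∈ L, (exp(ψ)(a) - id)(U) ⊆ [U, L]. Consequently, setting [M, exp(L)] = Span{m - exp(ψ)(a)(m) : a ∈ L, m ∈ M} and iterating, one has [M, _i exp(L)] ⊆ [M, _i L] for all i ≥ 1; in particular the group action exp(ψ) also has length at most d. -/

import Mathlib

attribute [local instance 100] LieRing.ofAssociativeRing

/-- Truncated exponential `∑_{k<p} f^k/k!` of an endomorphism of a `ℤ_[p]`-module. -/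
noncomputable def texp (p : ℕ) [Fact p.Prime] {M : Type*} [AddCommGroup M] [Module ℤ_[p] M]
    (f : Module.End ℤ_[p] M) : Module.End ℤ_[p] M :=
  ∑ k ∈ Finset.range p, Ring.inverse ((k.factorial : ℤ_[p])) • f ^ k

/-- Truncated logarithm `∑_{1≤k≤p-1} (-1)^{k+1}(g-1)^k/k`. -/
noncomputable def tlog (p : ℕ) [Fact p.Prime] {M : Type*} [AddCommGroup M] [Module ℤ_[p] M]
    (g : Module.End ℤ_[p] M) : Module.End ℤ_[p] M :=
  ∑ k ∈ Finset.Icc 1 (p - 1), ((-1 : ℤ_[p]) ^ (k + 1) * Ring.inverse ((k : ℤ_[p]))) • (g - 1) ^ k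


/-- `[U, L] = Span{a·m : m ∈ U, a ∈ L}`. -/
noncomputable def lieBr (p : ℕ) [Fact p.Prime] {M L : Type*} [AddCommGroup M] [Module ℤ_[p] M]
    [LieRing L] [LieAlgebra ℤ_[p] L]
    (ψ : L →ₗ⁅ℤ_[p]⁆ Module.End ℤ_[p] M) (U : Submodule ℤ_[p] M) : Submodule ℤ_[p] M :=
  Submodule.span ℤ_[p] {x | ∃ a : L, ∃ m ∈ U, x = ψ a m}

/-- Iterated `[M, _i L]`, with `[M, _0 L] = M`. -/
noncomputable def lieIter (p : ℕ) [Fact p.Prime] {M L : Type*} [AddCommGroup M] [Module ℤ_[p] M]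
    [LieRing L] [LieAlgebra ℤ_[p] L]
    (ψ : L →ₗ⁅ℤ_[p]⁆ Module.End ℤ_[p] M) : ℕ → Submodule ℤ_[p] M
  | 0 => ⊤
  | (i+1) => lieBr p ψ (lieIter p ψ i)


/-- `[U, exp(L)] = Span{m - exp(ψ(a))·m : m ∈ U, a ∈ L}`. -/
noncomputable def expBr (p : ℕ) [Fact p.Prime] {M L : Type*} [AddCommGroup M] [Module ℤ_[p] M]
    [LieRing L] [LieAlgebra ℤ_[p] L]
    (ψ : L →ₗ⁅ℤ_[p]⁆ Module.End ℤ_[p] M) (U : Submodule ℤ_[p] M) : Submodule ℤ_[p] M :=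
  Submodule.span ℤ_[p] {x | ∃ a : L, ∃ m ∈ U, x = m - texp p (ψ a) m}

/-- Iterated `[M, _i exp(L)]`. -/
noncomputable def expIter (p : ℕ) [Fact p.Prime] {M L : Type*} [AddCommGroup M] [Module ℤ_[p] M]
    [LieRing L] [LieAlgebra ℤ_[p] L]
    (ψ : L →ₗ⁅ℤ_[p]⁆ Module.End ℤ_[p] M) : ℕ → Submodule ℤ_[p] M
  | 0 => ⊤
  | (i+1) => expBr p ψ (expIter p ψ i)


section Aux

variable {p : ℕ} [Fact p.Prime] {M L : Type*} [AddCommGroup M] [Module ℤ_[p] M]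
    [LieRing L] [LieAlgebra ℤ_[p] L]

lemma texp_sub_mem' (ψ : L →ₗ⁅ℤ_[p]⁆ Module.End ℤ_[p] M)
    (U : Submodule ℤ_[p] M) (hU : ∀ a : L, ∀ m ∈ U, ψ a m ∈ U)
    (a : L) (m : M) (hm : m ∈ U) : texp p (ψ a) m - m ∈ lieBr p ψ U := by
  have hp : p = (p - 1) + 1 := (Nat.succ_pred_eq_of_pos (Fact.out : p.Prime).pos).symm
  have hpow : ∀ k, ((ψ a) ^ k) m ∈ U := by
    intro k; induction k with
    | zero => simpa using hm
    | succ k ih => rw [pow_succ', Module.End.mul_apply]; exact hU a _ ih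
  have hexp : texp p (ψ a) m = (∑ k ∈ Finset.range (p-1),
      (Ring.inverse (((k+1).factorial : ℤ_[p]))) • ((ψ a) ^ (k+1)) m) + m := by
    rw [texp, LinearMap.sum_apply]
    simp only [LinearMap.smul_apply]
    rw [show Finset.range p = Finset.range ((p-1)+1) by rw [← hp], Finset.sum_range_succ']
    simp
  rw [hexp, add_sub_cancel_right]
  apply Submodule.sum_mem
  intro k _
  apply Submodule.smul_mem
  apply Submodule.subset_span
  exact ⟨a, ((ψ a)^k) m, hpow k, by rw [pow_succ', Module.End.mul_apply]⟩

lemma lieIter_invariant (ψ : L →ₗ⁅ℤ_[p]⁆ Module.End ℤ_[p] M) :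
    ∀ i : ℕ, ∀ a : L, ∀ m ∈ lieIter p ψ i, ψ a m ∈ lieIter p ψ i := by
  intro i
  induction i with
  | zero => intro a m _; trivial
  | succ i ih =>
    intro a m hm
    refine Submodule.span_induction ?_ ?_ ?_ ?_ hm
    · rintro x ⟨b, u, hu, rfl⟩
      have key : ψ a (ψ b u) = ψ ⁅a, b⁆ u + ψ b (ψ a u) := by
        have h2 := ψ.map_lie (x := a) (y := b)
        rw [Ring.lie_def] at h2
        have h3 := congrArg (fun f : Module.End ℤ_[p] M => f u) h2
        simp only [LinearMap.sub_apply, Module.End.mul_apply] at h3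
        rw [h3]; abel
      rw [key]
      exact add_mem (Submodule.subset_span ⟨⁅a, b⁆, u, hu, rfl⟩)
        (Submodule.subset_span ⟨b, ψ a u, ih a u hu, rfl⟩)
    · simp
    · intro x y _ _ hx hy
      rw [map_add]; exact add_mem hx hy
    · intro c x _ hx
      rw [map_smul]; exact Submodule.smul_mem _ c hx

lemma expIter_le_lieIter (ψ : L →ₗ⁅ℤ_[p]⁆ Module.End ℤ_[p] M) :
    ∀ i : ℕ, expIter p ψ i ≤ lieIter p ψ i := by
  intro i
  induction i with
  | zero => exact le_rfl
  | succ i ih =>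
    rw [expIter, expBr, Submodule.span_le]
    rintro x ⟨a, m, hm, rfl⟩
    have hm' : m ∈ lieIter p ψ i := ih hm
    have := texp_sub_mem' ψ (lieIter p ψ i) (lieIter_invariant ψ i) a m hm'
    have hneg : m - texp p (ψ a) m = -(texp p (ψ a) m - m) := by abel
    rw [hneg]
    exact neg_mem this

end Aux


/-- For a Lie action of length `d < p`: `(exp(ψ)(a) - id)(U) ⊆ [U, L]` for every invariant
submodule `U`; consequently `[M, _i exp(L)] ⊆ [M, _i L]` for all `i ≥ 1`, and in particular
the group action `exp(ψ)` also has length at most `d`. -/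


theorem stmt7 {p : ℕ} [Fact p.Prime] {M L : Type*} [AddCommGroup M] [Module ℤ_[p] M]
    [LieRing L] [LieAlgebra ℤ_[p] L] (ψ : L →ₗ⁅ℤ_[p]⁆ Module.End ℤ_[p] M)
    (d : ℕ) (hd : d < p) (h : lieIter p ψ d = ⊥) :
    (∀ U : Submodule ℤ_[p] M, (∀ a : L, ∀ m ∈ U, ψ a m ∈ U) →
      ∀ a : L, ∀ m ∈ U, texp p (ψ a) m - m ∈ lieBr p ψ U) ∧
    (∀ i : ℕ, 1 ≤ i → expIter p ψ i ≤ lieIter p ψ i) ∧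
    expIter p ψ d = ⊥ := by
  refine ⟨fun U hU a m hm => texp_sub_mem' ψ U hU a m hm,
    fun i _ => expIter_le_lieIter ψ i, ?_⟩
  cases d with
  | zero => simpa [expIter, lieIter] using h
  | succ n => exact le_bot_iff.mp (h ▸ expIter_le_lieIter ψ (n+1))
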